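/- Let U be an n-qubit unitary, k < n, and τ > 0. If S ⊆ [n] satisfies S ⊇ {i ∈ [n] : Inf_i^{≤k}[U] ≥ τ²/k}, then dist(U, J_{S,k}) ≤ dist(U, J_k) + √τ, where J_{S,k} is the class of k-junta unitaries supported inside S and J_k the class of all k-junta unitaries. -/

import Mathlib

open scoped Matrix

open Finset

/-- The four single-qubit Pauli matrices `I, X, Y, Z`. -/
noncomputable def pauli (x : Fin 4) : Matrix (Fin 2) (Fin 2) ℂ :=
  if x = 0 then 1
  else if x = 1 then !![0, 1; 1, 0]
  else if x = 2 then !![0, -Complex.I; Complex.I, 0]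
  else !![1, 0; 0, -1]

/-- The `n`-qubit Pauli string `σ_x = σ_{x₁} ⊗ ⋯ ⊗ σ_{xₙ}`. -/
noncomputable def pauliString {n : ℕ} (x : Fin n → Fin 4) :
    Matrix (Fin n → Fin 2) (Fin n → Fin 2) ℂ :=
  Matrix.of fun a b => ∏ i, pauli (x i) (a i) (b i)

/-- The Pauli (Fourier) coefficient `Û(x) = 2⁻ⁿ Tr(σ_x† U)`. -/
noncomputable def pauliCoeff {n : ℕ} (U : Matrix (Fin n → Fin 2) (Fin n → Fin 2) ℂ)
    (x : Fin n → Fin 4) : ℂ :=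
  (1 / 2 ^ n) * Matrix.trace ((pauliString x)ᴴ * U)

/-- The support of a Pauli string. -/
def psupp {n : ℕ} (x : Fin n → Fin 4) : Finset (Fin n) :=
  Finset.univ.filter fun i => x i ≠ 0

/-- Influence of a set of qubits: `Inf_A[U] = ∑_{supp(x) ∩ A ≠ ∅} |Û(x)|²`. -/
noncomputable def infSet {n : ℕ} (U : Matrix (Fin n → Fin 2) (Fin n → Fin 2) ℂ)
    (A : Finset (Fin n)) : ℝ :=
  ∑ x ∈ Finset.univ.filter (fun x : Fin n → Fin 4 => (psupp x ∩ A).Nonempty),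
    ‖pauliCoeff U x‖ ^ 2

/-- Degree-`k` influence of qubit `i`:
`Inf_i^{≤k}[U] = ∑_{|supp(x)| ≤ k, x_i ≠ 0} |Û(x)|²`. -/
noncomputable def infLe {n : ℕ} (U : Matrix (Fin n → Fin 2) (Fin n → Fin 2) ℂ)
    (k : ℕ) (i : Fin n) : ℝ :=
  ∑ x ∈ Finset.univ.filter (fun x : Fin n → Fin 4 => (psupp x).card ≤ k ∧ x i ≠ 0),
    ‖pauliCoeff U x‖ ^ 2

/-- A matrix is a junta on the qubit set T if all its Pauli coefficients
outside T vanish, i.e. it acts nontrivially only on T. -/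
def IsJuntaOn {n : ℕ} (V : Matrix (Fin n → Fin 2) (Fin n → Fin 2) ℂ)
    (T : Finset (Fin n)) : Prop :=
  ∀ x : Fin n → Fin 4, ¬ psupp x ⊆ T → pauliCoeff V x = 0

/-- The distance from U to the class of k-junta unitaries supported inside S,
using the phase-minimized normalized Frobenius distance
dist(U,V) = sqrt(1 - |Tr(U† V)|/2^n). -/
noncomputable def distToKJuntaIn {n : ℕ} (U : Matrix (Fin n → Fin 2) (Fin n → Fin 2) ℂ)
    (S : Finset (Fin n)) (k : ℕ) : ℝ :=
  sInf {r : ℝ | ∃ V ∈ Matrix.unitaryGroup (Fin n → Fin 2) ℂ,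
    ∃ T : Finset (Fin n), T ⊆ S ∧ T.card ≤ k ∧ IsJuntaOn V T ∧
    r = Real.sqrt (1 - ‖Matrix.trace (Uᴴ * V)‖ / (2 ^ n : ℝ))}

namespace Stmt18Aux
open Matrix

/-- sign table for Pauli conjugation -/
def eps (p q : Fin 4) : ℂ := if p = 0 ∨ q = 0 ∨ p = q then 1 else -1

lemma pauli_conjTranspose (p : Fin 4) : (pauli p)ᴴ = pauli p := by
  fin_cases p <;>
    simp [pauli, Matrix.one_fin_two, conjTranspose, Matrix.map, Matrix.transpose] <;>
    · ext i j; fin_cases i <;> fin_cases j <;> simp [Complex.ext_iff]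

lemma pauli_mul_self (p : Fin 4) : pauli p * pauli p = 1 := by
  fin_cases p <;>
    simp [pauli, Matrix.mul_fin_two, Matrix.one_fin_two, Complex.I_mul_I] <;>
    norm_num [Complex.ext_iff]

lemma pauli_conj (p q : Fin 4) : pauli p * pauli q * pauli p = eps p q • pauli q := by
  fin_cases p <;> fin_cases q <;>
    simp [pauli, eps, Matrix.mul_fin_two, Matrix.one_fin_two, Matrix.smul_of] <;>
    · ext i j; fin_cases i <;> fin_cases j <;> simp [Complex.ext_iff] <;> ring_nf <;>
      simp [Complex.I_sq, Complex.ext_iff]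

lemma trace_pauli_mul (p q : Fin 4) :
    Matrix.trace (pauli p * pauli q) = if p = q then 2 else 0 := by
  fin_cases p <;> fin_cases q <;>
    simp [pauli, Matrix.mul_fin_two, Matrix.one_fin_two, Matrix.trace_fin_two] <;>
    norm_num [Complex.ext_iff]

lemma trace_pauli (p : Fin 4) : Matrix.trace (pauli p) = if p = 0 then 2 else 0 := by
  fin_cases p <;> simp [pauli, Matrix.trace_fin_two, Matrix.one_fin_two] <;>
    norm_num [Complex.ext_iff]

lemma eps_sum (q : Fin 4) : ∑ p : Fin 4, eps p q = if q = 0 then 4 else 0 := by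
  fin_cases q <;> simp [eps, Fin.sum_univ_four] <;> norm_num

variable {n : ℕ}

/-- tensor product of single-qubit matrices along all qubits -/
def tens (M : Fin n → Matrix (Fin 2) (Fin 2) ℂ) :
    Matrix (Fin n → Fin 2) (Fin n → Fin 2) ℂ :=
  Matrix.of fun a b => ∏ i, M i (a i) (b i)

lemma tens_apply (M : Fin n → Matrix (Fin 2) (Fin 2) ℂ) (a b : Fin n → Fin 2) :
    tens M a b = ∏ i, M i (a i) (b i) := rfl

lemma tens_mul (M M' : Fin n → Matrix (Fin 2) (Fin 2) ℂ) :
    tens M * tens M' = tens (fun i => M i * M' i) := by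
  ext a b
  simp only [Matrix.mul_apply, tens_apply]
  rw [Finset.prod_univ_sum, Fintype.piFinset_univ]
  exact Finset.sum_congr rfl fun c _ => (Finset.prod_mul_distrib).symm

lemma tens_one : tens (fun _ : Fin n => (1 : Matrix (Fin 2) (Fin 2) ℂ)) = 1 := by
  ext a b
  simp only [tens_apply, Matrix.one_apply]
  by_cases h : a = b
  · subst h; simp
  · rw [if_neg h]
    obtain ⟨i, hi⟩ := Function.ne_iff.mp h
    exact Finset.prod_eq_zero (Finset.mem_univ i) (by simp [Matrix.one_apply, hi])

lemma tens_smul (c : Fin n → ℂ) (M : Fin n → Matrix (Fin 2) (Fin 2) ℂ) :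
    tens (fun i => c i • M i) = (∏ i, c i) • tens M := by
  ext a b
  simp [tens_apply, Finset.prod_mul_distrib]

lemma tens_conjTranspose (M : Fin n → Matrix (Fin 2) (Fin 2) ℂ) :
    (tens M)ᴴ = tens (fun i => (M i)ᴴ) := by
  ext a b
  simp [tens_apply, Matrix.conjTranspose_apply, map_prod]

lemma trace_tens (M : Fin n → Matrix (Fin 2) (Fin 2) ℂ) :
    Matrix.trace (tens M) = ∏ i, Matrix.trace (M i) := by
  simp only [Matrix.trace, Matrix.diag, tens_apply]
  rw [Finset.prod_univ_sum, Fintype.piFinset_univ]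

lemma pauliString_eq_tens (x : Fin n → Fin 4) :
    pauliString x = tens (fun i => pauli (x i)) := rfl

lemma pauliString_conjTranspose (x : Fin n → Fin 4) :
    (pauliString x)ᴴ = pauliString x := by
  rw [pauliString_eq_tens, tens_conjTranspose]
  simp [pauli_conjTranspose]

lemma pauliString_mem_unitaryGroup (x : Fin n → Fin 4) :
    pauliString x ∈ Matrix.unitaryGroup (Fin n → Fin 2) ℂ := by
  rw [Matrix.mem_unitaryGroup_iff, Matrix.star_eq_conjTranspose, pauliString_conjTranspose,
    pauliString_eq_tens, tens_mul]
  simp [pauli_mul_self, tens_one]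

lemma pauliString_mul_self (x : Fin n → Fin 4) :
    pauliString x * pauliString x = 1 := by
  rw [pauliString_eq_tens, tens_mul]; simp [pauli_mul_self, tens_one]

lemma trace_pauliString_mul (x y : Fin n → Fin 4) :
    Matrix.trace (pauliString x * pauliString y)
      = if x = y then (2 ^ n : ℂ) else 0 := by
  rw [pauliString_eq_tens, pauliString_eq_tens, tens_mul, trace_tens]
  by_cases h : x = y
  · subst h
    rw [if_pos rfl]
    rw [Finset.prod_congr rfl fun i _ => trace_pauli_mul (x i) (x i)]
    simp
  · rw [if_neg h]
    obtain ⟨i, hi⟩ := Function.ne_iff.mp h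
    exact Finset.prod_eq_zero (Finset.mem_univ i)
      (by rw [trace_pauli_mul]; simp [hi])

lemma trace_pauliString (x : Fin n → Fin 4) :
    Matrix.trace (pauliString x) = if (∀ i, x i = 0) then (2 ^ n : ℂ) else 0 := by
  rw [pauliString_eq_tens, trace_tens]
  by_cases h : ∀ i, x i = 0
  · rw [if_pos h, Finset.prod_congr rfl fun i _ => by rw [trace_pauli, if_pos (h i)]]
    simp
  · rw [if_neg h]
    push_neg at h
    obtain ⟨i, hi⟩ := h
    exact Finset.prod_eq_zero (Finset.mem_univ i) (by rw [trace_pauli, if_neg hi])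

/-- conjugation of a Pauli string by a Pauli string -/
lemma pauliString_conj (z x : Fin n → Fin 4) :
    pauliString z * pauliString x * pauliString z
      = (∏ i, eps (z i) (x i)) • pauliString x := by
  rw [pauliString_eq_tens, pauliString_eq_tens, tens_mul, tens_mul]
  rw [show (fun i => pauli (z i) * pauli (x i) * pauli (z i))
      = fun i => eps (z i) (x i) • pauli (x i) from funext fun i => pauli_conj _ _]
  exact tens_smul _ _

end Stmt18Aux
namespace Stmt18Aux
open Matrix
variable {n : ℕ}

lemma pauliCoeff_eq (A : Matrix (Fin n → Fin 2) (Fin n → Fin 2) ℂ) (x : Fin n → Fin 4) :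
    pauliCoeff A x = (1 / 2 ^ n : ℂ) * Matrix.trace (pauliString x * A) := by
  rw [pauliCoeff, pauliString_conjTranspose]

lemma trace_pauliString_mul_eq (A : Matrix (Fin n → Fin 2) (Fin n → Fin 2) ℂ)
    (x : Fin n → Fin 4) :
    Matrix.trace (pauliString x * A) = (2 ^ n : ℂ) * pauliCoeff A x := by
  rw [pauliCoeff_eq]
  have h : (2 : ℂ) ^ n ≠ 0 := pow_ne_zero _ two_ne_zero
  field_simp

lemma pauliCoeff_sum {ι : Type*} (s : Finset ι)
    (f : ι → Matrix (Fin n → Fin 2) (Fin n → Fin 2) ℂ) (x : Fin n → Fin 4) :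
    pauliCoeff (∑ j ∈ s, f j) x = ∑ j ∈ s, pauliCoeff (f j) x := by
  simp [pauliCoeff_eq, Finset.mul_sum, Matrix.trace_sum]

lemma pauliCoeff_smul (c : ℂ) (A : Matrix (Fin n → Fin 2) (Fin n → Fin 2) ℂ)
    (x : Fin n → Fin 4) : pauliCoeff (c • A) x = c * pauliCoeff A x := by
  simp [pauliCoeff_eq]; ring

lemma pauliCoeff_pauliString (x y : Fin n → Fin 4) :
    pauliCoeff (pauliString y) x = if x = y then 1 else 0 := by
  rw [pauliCoeff_eq, trace_pauliString_mul]
  have h : (2 : ℂ) ^ n ≠ 0 := pow_ne_zero _ two_ne_zero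
  split_ifs <;> field_simp <;> simp

lemma pauliCoeff_of_sum (c : (Fin n → Fin 4) → ℂ) (y : Fin n → Fin 4) :
    pauliCoeff (∑ x, c x • pauliString x) y = c y := by
  rw [pauliCoeff_sum]
  rw [Finset.sum_congr rfl fun x _ => by
    rw [pauliCoeff_smul, pauliCoeff_pauliString]]
  simp [Finset.sum_ite_eq']

/-- Pauli expansion of an arbitrary matrix. -/
lemma expansion (A : Matrix (Fin n → Fin 2) (Fin n → Fin 2) ℂ) :
    A = ∑ x, pauliCoeff A x • pauliString x := by
  classical
  let Φ : ((Fin n → Fin 4) → ℂ) →ₗ[ℂ] Matrix (Fin n → Fin 2) (Fin n → Fin 2) ℂ :=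
    { toFun := fun c => ∑ x, c x • pauliString x
      map_add' := fun c d => by simp [add_smul, Finset.sum_add_distrib]
      map_smul' := fun r c => by simp [smul_smul, Finset.smul_sum] }
  have hinj : Function.Injective Φ := by
    rw [← LinearMap.ker_eq_bot, LinearMap.ker_eq_bot']
    intro c hc
    funext y
    have := pauliCoeff_of_sum c y
    rw [show (∑ x, c x • pauliString x) = Φ c from rfl, hc] at this
    simpa [pauliCoeff_eq] using this.symm
  have hfr : Module.finrank ℂ ((Fin n → Fin 4) → ℂ)
      = Module.finrank ℂ (Matrix (Fin n → Fin 2) (Fin n → Fin 2) ℂ) := by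
    rw [Module.finrank_fintype_fun_eq_card, Module.finrank_matrix]
    simp [Fintype.card_fun]
    rw [← mul_pow]
    norm_num
  have hsurj := (LinearMap.injective_iff_surjective_of_finrank_eq_finrank hfr).mp hinj
  obtain ⟨c, hc⟩ := hsurj A
  have hc' : (∑ x, c x • pauliString x) = A := hc
  rw [← hc']
  exact (Finset.sum_congr rfl fun x _ => by rw [pauliCoeff_of_sum]).symm

/-- Parseval / Plancherel. -/
lemma parseval (A B : Matrix (Fin n → Fin 2) (Fin n → Fin 2) ℂ) :
    Matrix.trace (Aᴴ * B)
      = (2 ^ n : ℂ) * ∑ x, (starRingEnd ℂ) (pauliCoeff A x) * pauliCoeff B x := by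
  conv_lhs => rw [expansion A]
  rw [Matrix.conjTranspose_sum]
  rw [Finset.sum_congr rfl fun x _ => by
    rw [Matrix.conjTranspose_smul, pauliString_conjTranspose]]
  rw [Finset.sum_mul, Matrix.trace_sum]
  rw [Finset.sum_congr rfl fun x _ => by
    rw [Matrix.smul_mul, Matrix.trace_smul, trace_pauliString_mul_eq, smul_eq_mul]]
  rw [Finset.mul_sum]
  exact Finset.sum_congr rfl fun x _ => by
    simp only [starRingEnd_apply]; push_cast; ring

lemma sum_sq_coeff_of_unitary {U : Matrix (Fin n → Fin 2) (Fin n → Fin 2) ℂ}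
    (hU : U ∈ Matrix.unitaryGroup (Fin n → Fin 2) ℂ) :
    ∑ x, ‖pauliCoeff U x‖ ^ 2 = 1 := by
  have h1 : Uᴴ * U = 1 := by
    have := Matrix.mem_unitaryGroup_iff'.mp hU
    rwa [Matrix.star_eq_conjTranspose] at this
  have h2 := parseval U U
  rw [h1, Matrix.trace_one] at h2
  have hcard : (Fintype.card (Fin n → Fin 2) : ℂ) = (2 : ℂ) ^ n := by
    simp [Fintype.card_fun]
  rw [hcard] at h2
  have h : (2 : ℂ) ^ n ≠ 0 := pow_ne_zero _ two_ne_zero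
  have h3 : (∑ x, (starRingEnd ℂ) (pauliCoeff U x) * pauliCoeff U x) = 1 :=
    mul_left_cancel₀ h (by rw [mul_one]; exact h2.symm)
  have key : ∀ z : ℂ, (starRingEnd ℂ) z * z = ((‖z‖ ^ 2 : ℝ) : ℂ) := fun z => by
    rw [mul_comm, Complex.mul_conj, ← Complex.sq_norm]
  have h4 : (((∑ x, ‖pauliCoeff U x‖ ^ 2 : ℝ)) : ℂ) = 1 := by
    rw [← h3, Finset.sum_congr rfl fun x _ => key (pauliCoeff U x)]
    push_cast
    rfl
  exact_mod_cast h4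

/-- Cauchy–Schwarz for complex sums. -/
lemma abs_sum_conj_mul_le {ι : Type*} (s : Finset ι) (f g : ι → ℂ) :
    ‖∑ i ∈ s, (starRingEnd ℂ) (f i) * g i‖
      ≤ Real.sqrt (∑ i ∈ s, ‖f i‖ ^ 2)
        * Real.sqrt (∑ i ∈ s, ‖g i‖ ^ 2) := by
  have h1 : ‖∑ i ∈ s, (starRingEnd ℂ) (f i) * g i‖
      ≤ ∑ i ∈ s, ‖f i‖ * ‖g i‖ := by
    refine le_trans (norm_sum_le _ _) ?_
    refine le_of_eq (Finset.sum_congr rfl fun i _ => ?_)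
    rw [norm_mul, Complex.norm_conj]
  refine le_trans h1 ?_
  have h2 := Finset.sum_mul_sq_le_sq_mul_sq s (fun i => ‖f i‖)
    (fun i => ‖g i‖)
  have h3 : (0 : ℝ) ≤ ∑ i ∈ s, ‖f i‖ * ‖g i‖ :=
    Finset.sum_nonneg fun i _ => mul_nonneg (norm_nonneg _) (norm_nonneg _)
  have h4 : (0 : ℝ) ≤ ∑ i ∈ s, ‖f i‖ ^ 2 :=
    Finset.sum_nonneg fun i _ => sq_nonneg _
  have h5 : (0 : ℝ) ≤ ∑ i ∈ s, ‖g i‖ ^ 2 :=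
    Finset.sum_nonneg fun i _ => sq_nonneg _
  have key : (∑ i ∈ s, ‖f i‖ * ‖g i‖) ^ 2
      ≤ (Real.sqrt (∑ i ∈ s, ‖f i‖ ^ 2)
          * Real.sqrt (∑ i ∈ s, ‖g i‖ ^ 2)) ^ 2 := by
    rw [mul_pow, Real.sq_sqrt h4, Real.sq_sqrt h5]
    exact h2
  calc (∑ i ∈ s, ‖f i‖ * ‖g i‖)
      = Real.sqrt ((∑ i ∈ s, ‖f i‖ * ‖g i‖) ^ 2) :=
        (Real.sqrt_sq h3).symm
    _ ≤ Real.sqrt ((Real.sqrt (∑ i ∈ s, ‖f i‖ ^ 2)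
          * Real.sqrt (∑ i ∈ s, ‖g i‖ ^ 2)) ^ 2) := Real.sqrt_le_sqrt key
    _ = _ := Real.sqrt_sq (mul_nonneg (Real.sqrt_nonneg _) (Real.sqrt_nonneg _))

end Stmt18Aux
namespace Stmt18Aux
open Matrix
variable {n : ℕ}

/-- The Pauli strings supported outside `A` (used for twirling). -/
def Zset (A : Finset (Fin n)) : Finset (Fin n → Fin 4) :=
  Fintype.piFinset (fun i => if i ∈ A then ({0} : Finset (Fin 4)) else Finset.univ)

lemma mem_Zset {A : Finset (Fin n)} {z : Fin n → Fin 4} :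
    z ∈ Zset A ↔ ∀ i ∈ A, z i = 0 := by
  simp only [Zset, Fintype.mem_piFinset]
  constructor
  · intro h i hi; have := h i; rwa [if_pos hi, Finset.mem_singleton] at this
  · intro h i
    by_cases hi : i ∈ A
    · rw [if_pos hi, Finset.mem_singleton]; exact h i hi
    · rw [if_neg hi]; exact Finset.mem_univ _

lemma Zset_card_pos (A : Finset (Fin n)) : 0 < (Zset A).card :=
  Finset.card_pos.mpr ⟨fun _ => 0, mem_Zset.mpr fun _ _ => rfl⟩

lemma Zset_card_ne_zero (A : Finset (Fin n)) : (((Zset A).card : ℕ) : ℂ) ≠ 0 := by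
  exact_mod_cast (Zset_card_pos A).ne'

lemma sum_eps_Zset (A : Finset (Fin n)) (x : Fin n → Fin 4) :
    ∑ z ∈ Zset A, (∏ i, eps (z i) (x i))
      = if psupp x ⊆ A then (((Zset A).card : ℕ) : ℂ) else 0 := by
  classical
  have hps := Finset.prod_univ_sum (fun i => if i ∈ A then ({0} : Finset (Fin 4)) else Finset.univ)
    (fun i p => eps p (x i))
  rw [Zset, ← hps]
  have hfac : ∀ i, (∑ p ∈ (if i ∈ A then ({0} : Finset (Fin 4)) else Finset.univ), eps p (x i))
      = if i ∈ A then 1 else (if x i = 0 then 4 else 0) := by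
    intro i
    by_cases hi : i ∈ A
    · rw [if_pos hi, if_pos hi, Finset.sum_singleton]; simp [eps]
    · rw [if_neg hi, if_neg hi]; exact eps_sum (x i)
  rw [Finset.prod_congr rfl fun i _ => hfac i]
  by_cases hx : psupp x ⊆ A
  · rw [if_pos hx, Fintype.card_piFinset]
    push_cast
    refine Finset.prod_congr rfl fun i _ => ?_
    by_cases hi : i ∈ A
    · simp [hi]
    · have hxi : x i = 0 := by
        by_contra hne
        exact hi (hx (by simp [psupp, hne]))
      simp [hi, hxi]
  · rw [if_neg hx]
    obtain ⟨i, hi, hiA⟩ := Finset.not_subset.mp hx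
    have hxi : x i ≠ 0 := by simpa [psupp] using hi
    exact Finset.prod_eq_zero (Finset.mem_univ i) (by simp [hiA, hxi])

lemma pauliCoeff_conj (z x : Fin n → Fin 4)
    (A : Matrix (Fin n → Fin 2) (Fin n → Fin 2) ℂ) :
    pauliCoeff (pauliString z * A * pauliString z) x
      = (∏ i, eps (z i) (x i)) * pauliCoeff A x := by
  rw [pauliCoeff_eq, pauliCoeff_eq]
  have h1 : pauliString x * (pauliString z * A * pauliString z)
      = pauliString x * pauliString z * A * pauliString z := by
    simp only [mul_assoc]
  rw [h1, Matrix.trace_mul_cycle (pauliString x * pauliString z) A (pauliString z)]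
  have h2 : pauliString z * (pauliString x * pauliString z) * A
      = (pauliString z * pauliString x * pauliString z) * A := by
    simp only [mul_assoc]
  rw [h2, pauliString_conj, Matrix.smul_mul, Matrix.trace_smul, smul_eq_mul]
  ring

/-- Twirl of a matrix over the Paulis supported outside `A`. -/
noncomputable def twirl (M : Matrix (Fin n → Fin 2) (Fin n → Fin 2) ℂ)
    (A : Finset (Fin n)) : Matrix (Fin n → Fin 2) (Fin n → Fin 2) ℂ :=
  ((((Zset A).card : ℕ) : ℂ))⁻¹ • ∑ z ∈ Zset A, pauliString z * M * pauliString z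

lemma pauliCoeff_twirl (M : Matrix (Fin n → Fin 2) (Fin n → Fin 2) ℂ)
    (A : Finset (Fin n)) (x : Fin n → Fin 4) :
    pauliCoeff (twirl M A) x = if psupp x ⊆ A then pauliCoeff M x else 0 := by
  rw [twirl]
  have : pauliCoeff ((∑ z ∈ Zset A, pauliString z * M * pauliString z)) x
      = (∑ z ∈ Zset A, ∏ i, eps (z i) (x i)) * pauliCoeff M x := by
    rw [pauliCoeff_sum, Finset.sum_congr rfl fun z _ => pauliCoeff_conj z x M,
      Finset.sum_mul]
  rw [show (((((Zset A).card : ℕ) : ℂ))⁻¹ •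
      ∑ z ∈ Zset A, pauliString z * M * pauliString z)
    = ((((Zset A).card : ℕ) : ℂ))⁻¹ • (∑ z ∈ Zset A, pauliString z * M * pauliString z) from rfl]
  rw [pauliCoeff_smul, this, sum_eps_Zset]
  by_cases hx : psupp x ⊆ A
  · rw [if_pos hx, if_pos hx]
    rw [← mul_assoc, inv_mul_cancel₀ (Zset_card_ne_zero A), one_mul]
  · rw [if_neg hx, if_neg hx, zero_mul, mul_zero]

lemma isJuntaOn_twirl (M : Matrix (Fin n → Fin 2) (Fin n → Fin 2) ℂ)
    (A : Finset (Fin n)) : IsJuntaOn (twirl M A) A := by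
  intro x hx
  rw [pauliCoeff_twirl, if_neg hx]

lemma commute_pauliString {z x : Fin n → Fin 4} (h : ∀ i, z i = 0 ∨ x i = 0) :
    pauliString z * pauliString x = pauliString x * pauliString z := by
  have heps : (∏ i, eps (z i) (x i)) = 1 := by
    refine Finset.prod_eq_one fun i _ => ?_
    rcases h i with h' | h' <;> simp [eps, h']
  have hconj := pauliString_conj z x
  rw [heps, one_smul] at hconj
  calc pauliString z * pauliString x
      = pauliString z * pauliString x * (pauliString z * pauliString z) := by
        rw [pauliString_mul_self, mul_one]
    _ = (pauliString z * pauliString x * pauliString z) * pauliString z := by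
        simp only [mul_assoc]
    _ = pauliString x * pauliString z := by rw [hconj]

lemma commute_of_junta {M : Matrix (Fin n → Fin 2) (Fin n → Fin 2) ℂ}
    {A : Finset (Fin n)} (hM : IsJuntaOn M A) {z : Fin n → Fin 4} (hz : z ∈ Zset A) :
    pauliString z * M = M * pauliString z := by
  conv_lhs => rw [expansion M]
  conv_rhs => rw [expansion M]
  rw [Finset.mul_sum, Finset.sum_mul]
  refine Finset.sum_congr rfl fun x _ => ?_
  rw [Matrix.mul_smul, Matrix.smul_mul]
  by_cases hx : psupp x ⊆ A
  · congr 1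
    refine commute_pauliString fun i => ?_
    by_cases hzi : z i = 0
    · exact Or.inl hzi
    · right
      by_contra hxi
      have hiA : i ∈ A := hx (by simp [psupp, hxi])
      exact hzi (mem_Zset.mp hz i hiA)
  · rw [hM x hx, zero_smul, zero_smul]

lemma twirl_eq_of_commute {M : Matrix (Fin n → Fin 2) (Fin n → Fin 2) ℂ}
    {A : Finset (Fin n)}
    (h : ∀ z ∈ Zset A, pauliString z * M = M * pauliString z) :
    twirl M A = M := by
  rw [twirl]
  have : ∀ z ∈ Zset A, pauliString z * M * pauliString z = M := by
    intro z hz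
    rw [h z hz, mul_assoc, pauliString_mul_self, mul_one]
  rw [Finset.sum_congr rfl this, Finset.sum_const, ← Nat.cast_smul_eq_nsmul ℂ, smul_smul,
    inv_mul_cancel₀ (Zset_card_ne_zero A), one_smul]

lemma junta_of_commute {M : Matrix (Fin n → Fin 2) (Fin n → Fin 2) ℂ}
    {A : Finset (Fin n)}
    (h : ∀ z ∈ Zset A, pauliString z * M = M * pauliString z) :
    IsJuntaOn M A := by
  intro x hx
  have := pauliCoeff_twirl M A x
  rw [twirl_eq_of_commute h, if_neg hx] at this
  exact this

end Stmt18Aux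
namespace Stmt18Aux
open Matrix Polynomial
variable {n : ℕ}

lemma unitary_diag_abs_le_one {Y : Matrix (Fin n → Fin 2) (Fin n → Fin 2) ℂ}
    (hY : Y ∈ Matrix.unitaryGroup (Fin n → Fin 2) ℂ) (i : Fin n → Fin 2) :
    ‖Y i i‖ ≤ 1 := by
  have h := Matrix.mem_unitaryGroup_iff'.mp hY
  have h2 : (star Y * Y) i i = (1 : Matrix (Fin n → Fin 2) (Fin n → Fin 2) ℂ) i i := by rw [h]
  rw [Matrix.star_eq_conjTranspose, Matrix.mul_apply, Matrix.one_apply_eq] at h2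
  have h3 : (((∑ j, Complex.normSq (Y j i) : ℝ)) : ℂ) = 1 := by
    rw [← h2]
    push_cast
    refine Finset.sum_congr rfl fun j _ => ?_
    rw [Matrix.conjTranspose_apply, mul_comm, ← starRingEnd_apply]
    exact (Complex.mul_conj _).symm
  have h4 : (∑ j, Complex.normSq (Y j i)) = 1 := by exact_mod_cast h3
  have h5 : Complex.normSq (Y i i) ≤ 1 := by
    rw [← h4]
    exact Finset.single_le_sum (f := fun j => Complex.normSq (Y j i))
      (fun j _ => Complex.normSq_nonneg _) (Finset.mem_univ i)
  rw [Complex.norm_def]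
  calc Real.sqrt (Complex.normSq (Y i i)) ≤ Real.sqrt 1 := Real.sqrt_le_sqrt h5
    _ = 1 := Real.sqrt_one

lemma trace_posdiag_mul_unitary_le {E Y : Matrix (Fin n → Fin 2) (Fin n → Fin 2) ℂ}
    (hE : E ∈ Matrix.unitaryGroup (Fin n → Fin 2) ℂ)
    (hY : Y ∈ Matrix.unitaryGroup (Fin n → Fin 2) ℂ)
    (d : (Fin n → Fin 2) → ℝ) (hd : ∀ i, 0 ≤ d i) :
    ‖Matrix.trace (E * Matrix.diagonal (fun i => (d i : ℂ)) * Eᴴ * Y)‖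
      ≤ ∑ i, d i := by
  have e1 : E * Matrix.diagonal (fun i => (d i : ℂ)) * Eᴴ * Y
      = E * (Matrix.diagonal (fun i => (d i : ℂ)) * (Eᴴ * Y)) := by
    simp only [mul_assoc]
  rw [e1, Matrix.trace_mul_comm, mul_assoc]
  have hEs : Eᴴ = star E := (Matrix.star_eq_conjTranspose E).symm
  have hM : Eᴴ * Y * E ∈ Matrix.unitaryGroup (Fin n → Fin 2) ℂ := by
    rw [hEs]
    exact mul_mem (mul_mem (Unitary.star_mem hE) hY) hE
  have htr : Matrix.trace (Matrix.diagonal (fun i => (d i : ℂ)) * (Eᴴ * Y * E))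
      = ∑ i, (d i : ℂ) * (Eᴴ * Y * E) i i := by
    unfold Matrix.trace
    refine Finset.sum_congr rfl fun i _ => ?_
    rw [Matrix.diag]
    rw [Matrix.mul_apply]
    rw [Finset.sum_eq_single i
      (fun b _ hb => by rw [Matrix.diagonal_apply_ne _ (Ne.symm hb), zero_mul])
      (fun hb => absurd (Finset.mem_univ i) hb)]
    rw [Matrix.diagonal_apply_eq]
  rw [htr]
  calc ‖∑ i, (d i : ℂ) * (Eᴴ * Y * E) i i‖
      ≤ ∑ i, ‖(d i : ℂ) * (Eᴴ * Y * E) i i‖ := norm_sum_le _ _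
    _ ≤ ∑ i, d i := by
        refine Finset.sum_le_sum fun i _ => ?_
        rw [norm_mul, Complex.norm_real, Real.norm_eq_abs, abs_of_nonneg (hd i)]
        calc d i * ‖(Eᴴ * Y * E) i i‖
            ≤ d i * 1 := by
              exact mul_le_mul_of_nonneg_left (unitary_diag_abs_le_one hM i) (hd i)
          _ = d i := mul_one _

lemma commute_aeval {c A : Matrix (Fin n → Fin 2) (Fin n → Fin 2) ℂ}
    (h : c * A = A * c) (p : Polynomial ℂ) :
    c * (Polynomial.aeval A p) = (Polynomial.aeval A p) * c := by
  have hc : Commute c A := h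
  induction p using Polynomial.induction_on' with
  | add p q hp hq =>
    rw [map_add, mul_add, add_mul, hp, hq]
  | monomial k t =>
    rw [Polynomial.aeval_monomial]
    exact (Commute.mul_right ((Algebra.commutes t c).symm) (hc.pow_right k) : _)

end Stmt18Aux
namespace Stmt18Aux
open Matrix Polynomial
open scoped ComplexOrder
variable {n : ℕ}

lemma polar_exists (A : Finset (Fin n)) (X : Matrix (Fin n → Fin 2) (Fin n → Fin 2) ℂ)
    (hXj : IsJuntaOn X A) (hdet : IsUnit X.det) :
    ∃ (W : Matrix (Fin n → Fin 2) (Fin n → Fin 2) ℂ) (s : ℝ),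
      W ∈ Matrix.unitaryGroup (Fin n → Fin 2) ℂ ∧ IsJuntaOn W A ∧ 0 ≤ s ∧
      Matrix.trace (Xᴴ * W) = (s : ℂ) ∧
      ∀ Z ∈ Matrix.unitaryGroup (Fin n → Fin 2) ℂ,
        ‖Matrix.trace (Xᴴ * Z)‖ ≤ s := by
  classical
  have hpsd : (Xᴴ * X).PosSemidef := Matrix.posSemidef_conjTranspose_mul_self X
  have hH : (Xᴴ * X).IsHermitian := hpsd.1
  set H : Matrix (Fin n → Fin 2) (Fin n → Fin 2) ℂ := Xᴴ * X with hHdef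
  set eig : (Fin n → Fin 2) → ℝ := hH.eigenvalues with heigdef
  have heignn : ∀ i, 0 ≤ eig i := fun i => hpsd.eigenvalues_nonneg i
  have hdetH : H.det ≠ 0 := by
    rw [hHdef, Matrix.det_mul, Matrix.det_conjTranspose]
    exact mul_ne_zero (star_ne_zero.mpr hdet.ne_zero) hdet.ne_zero
  have heigne : ∀ i, eig i ≠ 0 := by
    intro i hi
    apply hdetH
    rw [hH.det_eq_prod_eigenvalues]
    refine Finset.prod_eq_zero (Finset.mem_univ i) ?_
    rw [← heigdef, hi]; simp
  have heigpos : ∀ i, 0 < eig i := fun i => lt_of_le_of_ne (heignn i) (Ne.symm (heigne i))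
  set E : Matrix (Fin n → Fin 2) (Fin n → Fin 2) ℂ := ((hH.eigenvectorUnitary : Matrix (Fin n → Fin 2) (Fin n → Fin 2) ℂ))
    with hEdef
  have hE : E ∈ Matrix.unitaryGroup (Fin n → Fin 2) ℂ := hH.eigenvectorUnitary.prop
  have hEu1 : E * Eᴴ = 1 := by
    have := Matrix.mem_unitaryGroup_iff.mp hE
    rwa [Matrix.star_eq_conjTranspose] at this
  have hEu2 : Eᴴ * E = 1 := by
    have := Matrix.mem_unitaryGroup_iff'.mp hE
    rwa [Matrix.star_eq_conjTranspose] at this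
  have hspec : H = E * Matrix.diagonal (fun i => ((eig i : ℝ) : ℂ)) * Eᴴ := by
    have h := hH.spectral_theorem
    rw [Unitary.conjStarAlgAut_apply, Matrix.star_eq_conjTranspose] at h
    exact h
  -- interpolating polynomial for the square root
  set nodes : Finset ℝ := Finset.image eig Finset.univ with hnodes
  set p : Polynomial ℂ := Lagrange.interpolate nodes (fun t : ℝ => (t : ℂ))
    (fun t : ℝ => ((Real.sqrt t : ℝ) : ℂ)) with hpdef
  have hvinj : Set.InjOn (fun t : ℝ => (t : ℂ)) nodes :=
    fun a _ b _ hab => Complex.ofReal_inj.mp hab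
  have heval : ∀ i, Polynomial.eval ((eig i : ℝ) : ℂ) p = ((Real.sqrt (eig i) : ℝ) : ℂ) :=
    fun i => Lagrange.eval_interpolate_at_node _ hvinj
      (Finset.mem_image_of_mem eig (Finset.mem_univ i))
  -- conjugation algebra homomorphism
  have hmulaux : ∀ N : Matrix (Fin n → Fin 2) (Fin n → Fin 2) ℂ,
      Eᴴ * (E * N) = N := fun N => by rw [← mul_assoc, hEu2, one_mul]
  let Ψ : Matrix (Fin n → Fin 2) (Fin n → Fin 2) ℂ →ₐ[ℂ]
      Matrix (Fin n → Fin 2) (Fin n → Fin 2) ℂ :=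
    { toFun := fun M => E * M * Eᴴ
      map_one' := by show E * 1 * Eᴴ = 1; rw [mul_one, hEu1]
      map_mul' := fun M N => by
        show E * (M * N) * Eᴴ = (E * M * Eᴴ) * (E * N * Eᴴ)
        have h : Eᴴ * (E * (N * Eᴴ)) = N * Eᴴ := hmulaux (N * Eᴴ)
        simp only [mul_assoc, h]
      map_zero' := by show E * 0 * Eᴴ = 0; simp
      map_add' := fun M N => by
        show E * (M + N) * Eᴴ = E * M * Eᴴ + E * N * Eᴴ
        rw [Matrix.mul_add, Matrix.add_mul]
      commutes' := fun c => by
        show E * algebraMap ℂ _ c * Eᴴ = algebraMap ℂ _ c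
        simp only [Algebra.algebraMap_eq_smul_one, Matrix.smul_mul, Matrix.mul_smul,
          mul_one, hEu1] }
  have haevaldiag : Polynomial.aeval
        (Matrix.diagonal (fun i => ((eig i : ℝ) : ℂ))) p
      = Matrix.diagonal (fun i => ((Real.sqrt (eig i) : ℝ) : ℂ)) := by
    have h1 : Matrix.diagonal (fun i => ((eig i : ℝ) : ℂ))
        = Matrix.diagonalAlgHom ℂ (fun i => ((eig i : ℝ) : ℂ)) := rfl
    rw [h1, Polynomial.aeval_algHom_apply]
    have h2 : (Polynomial.aeval (fun i => ((eig i : ℝ) : ℂ)) p)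
        = fun i => ((Real.sqrt (eig i) : ℝ) : ℂ) := by
      funext i
      have h3 := Polynomial.aeval_algHom_apply
        (Pi.evalAlgHom ℂ (fun _ : Fin n → Fin 2 => ℂ) i)
        (fun i => ((eig i : ℝ) : ℂ)) p
      have h4 : Polynomial.aeval ((eig i : ℝ) : ℂ) p = ((Real.sqrt (eig i) : ℝ) : ℂ) := by
        rw [show (Polynomial.aeval ((eig i : ℝ) : ℂ)) p
          = Polynomial.eval ((eig i : ℝ) : ℂ) p from
            congrFun (Polynomial.coe_aeval_eq_eval _) p]
        exact heval i
      rw [← h4]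
      exact h3.symm
    rw [h2]
    rfl
  set P : Matrix (Fin n → Fin 2) (Fin n → Fin 2) ℂ := Polynomial.aeval H p with hPdef
  have hPeq : P = E * Matrix.diagonal (fun i => ((Real.sqrt (eig i) : ℝ) : ℂ)) * Eᴴ := by
    rw [hPdef, hspec]
    rw [show E * Matrix.diagonal (fun i => ((eig i : ℝ) : ℂ)) * Eᴴ
        = Ψ (Matrix.diagonal (fun i => ((eig i : ℝ) : ℂ))) from rfl]
    rw [Polynomial.aeval_algHom_apply, haevaldiag]
    rfl
  have hPherm : Pᴴ = P := by
    rw [hPeq, Matrix.conjTranspose_mul, Matrix.conjTranspose_mul,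
      Matrix.conjTranspose_conjTranspose, Matrix.diagonal_conjTranspose]
    have : (star fun i => ((Real.sqrt (eig i) : ℝ) : ℂ))
        = fun i => ((Real.sqrt (eig i) : ℝ) : ℂ) := by
      funext i
      exact Complex.conj_ofReal _
    rw [this, mul_assoc]
  have hPP : P * P = H := by
    rw [hPeq]
    have h1 : E * Matrix.diagonal (fun i => ((Real.sqrt (eig i) : ℝ) : ℂ)) * Eᴴ *
        (E * Matrix.diagonal (fun i => ((Real.sqrt (eig i) : ℝ) : ℂ)) * Eᴴ)
        = E * (Matrix.diagonal (fun i => ((Real.sqrt (eig i) : ℝ) : ℂ)) *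
            Matrix.diagonal (fun i => ((Real.sqrt (eig i) : ℝ) : ℂ))) * Eᴴ := by
      have h : Eᴴ * (E * (Matrix.diagonal (fun i => ((Real.sqrt (eig i) : ℝ) : ℂ)) * Eᴴ))
          = Matrix.diagonal (fun i => ((Real.sqrt (eig i) : ℝ) : ℂ)) * Eᴴ := hmulaux _
      simp only [mul_assoc, h]
    rw [h1, Matrix.diagonal_mul_diagonal]
    rw [show (fun i => ((Real.sqrt (eig i) : ℝ) : ℂ) * ((Real.sqrt (eig i) : ℝ) : ℂ))
        = fun i => ((eig i : ℝ) : ℂ) from funext fun i => by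
          rw [← Complex.ofReal_mul, Real.mul_self_sqrt (heignn i)]]
    exact hspec.symm
  have hPdet : IsUnit P.det := by
    rw [hPeq, Matrix.det_mul, Matrix.det_mul, Matrix.det_diagonal]
    have hEdet : E.det * Eᴴ.det = 1 := by rw [← Matrix.det_mul, hEu1, Matrix.det_one]
    have hprod : (∏ i, ((Real.sqrt (eig i) : ℝ) : ℂ)) ≠ 0 := by
      refine Finset.prod_ne_zero_iff.mpr fun i _ => ?_
      exact_mod_cast Real.sqrt_ne_zero'.mpr (heigpos i)
    refine isUnit_iff_ne_zero.mpr ?_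
    rw [mul_right_comm, hEdet, one_mul]
    exact hprod
  -- the unitary part of the polar decomposition
  set W : Matrix (Fin n → Fin 2) (Fin n → Fin 2) ℂ := X * P⁻¹ with hWdef
  have hPinvP : P⁻¹ * P = 1 := Matrix.nonsing_inv_mul P hPdet
  have hPPinv : P * P⁻¹ = 1 := Matrix.mul_nonsing_inv P hPdet
  have hPinvherm : (P⁻¹)ᴴ = P⁻¹ := by rw [Matrix.conjTranspose_nonsing_inv, hPherm]
  have hWu : W ∈ Matrix.unitaryGroup (Fin n → Fin 2) ℂ := by
    rw [Matrix.mem_unitaryGroup_iff', Matrix.star_eq_conjTranspose, hWdef,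
      Matrix.conjTranspose_mul, hPinvherm]
    calc P⁻¹ * Xᴴ * (X * P⁻¹) = P⁻¹ * (Xᴴ * X) * P⁻¹ := by simp only [mul_assoc]
      _ = P⁻¹ * (P * P) * P⁻¹ := by rw [← hHdef, ← hPP]
      _ = (P⁻¹ * P) * (P * P⁻¹) := by simp only [mul_assoc]
      _ = 1 := by rw [hPinvP, hPPinv, one_mul]
  -- commutation / junta property
  have hXc : ∀ z ∈ Zset A, pauliString z * X = X * pauliString z :=
    fun z hz => commute_of_junta hXj hz
  have hXHc : ∀ z ∈ Zset A, pauliString z * Xᴴ = Xᴴ * pauliString z := by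
    intro z hz
    have h := congrArg Matrix.conjTranspose (hXc z hz)
    rw [Matrix.conjTranspose_mul, Matrix.conjTranspose_mul, pauliString_conjTranspose] at h
    exact h.symm
  have hHc : ∀ z ∈ Zset A, pauliString z * H = H * pauliString z := by
    intro z hz
    calc pauliString z * (Xᴴ * X) = (pauliString z * Xᴴ) * X := by rw [mul_assoc]
      _ = Xᴴ * (pauliString z * X) := by rw [hXHc z hz, mul_assoc]
      _ = Xᴴ * X * pauliString z := by rw [hXc z hz, mul_assoc]
  have hPc : ∀ z ∈ Zset A, pauliString z * P = P * pauliString z := by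
    intro z hz
    exact commute_aeval (hHc z hz) p
  have hPinvc : ∀ z ∈ Zset A, pauliString z * P⁻¹ = P⁻¹ * pauliString z := by
    intro z hz
    calc pauliString z * P⁻¹ = P⁻¹ * P * (pauliString z * P⁻¹) := by rw [hPinvP, one_mul]
      _ = P⁻¹ * (P * pauliString z) * P⁻¹ := by simp only [mul_assoc]
      _ = P⁻¹ * (pauliString z * P) * P⁻¹ := by rw [hPc z hz]
      _ = P⁻¹ * pauliString z * (P * P⁻¹) := by simp only [mul_assoc]
      _ = P⁻¹ * pauliString z := by rw [hPPinv, mul_one]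
  have hWj : IsJuntaOn W A := by
    refine junta_of_commute fun z hz => ?_
    calc pauliString z * (X * P⁻¹) = (pauliString z * X) * P⁻¹ := by rw [mul_assoc]
      _ = X * (pauliString z * P⁻¹) := by rw [hXc z hz, mul_assoc]
      _ = X * P⁻¹ * pauliString z := by rw [hPinvc z hz, mul_assoc]
  -- the trace value
  set s : ℝ := ∑ i, Real.sqrt (eig i) with hsdef
  have hs0 : 0 ≤ s := Finset.sum_nonneg fun i _ => Real.sqrt_nonneg _
  have hXW : Xᴴ * W = P := by
    calc Xᴴ * (X * P⁻¹) = (Xᴴ * X) * P⁻¹ := by rw [mul_assoc]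
      _ = (P * P) * P⁻¹ := by rw [← hHdef, ← hPP]
      _ = P * (P * P⁻¹) := by rw [mul_assoc]
      _ = P := by rw [hPPinv, mul_one]
  have htraceP : Matrix.trace P = (s : ℂ) := by
    rw [hPeq, Matrix.trace_mul_cycle, hEu2, one_mul, Matrix.trace_diagonal, hsdef]
    push_cast
    rfl
  have hXWP : X = W * P := by
    rw [hWdef, mul_assoc, hPinvP, mul_one]
  have hXH : Xᴴ = P * Wᴴ := by
    rw [hXWP, Matrix.conjTranspose_mul, hPherm]
  refine ⟨W, s, hWu, hWj, hs0, by rw [hXW, htraceP], ?_⟩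
  intro Z hZ
  have hYu : Wᴴ * Z ∈ Matrix.unitaryGroup (Fin n → Fin 2) ℂ := by
    rw [← Matrix.star_eq_conjTranspose]
    exact mul_mem (Unitary.star_mem hWu) hZ
  have hexpr : Xᴴ * Z = E * Matrix.diagonal (fun i => ((Real.sqrt (eig i) : ℝ) : ℂ)) * Eᴴ *
      (Wᴴ * Z) := by
    rw [hXH, ← hPeq, mul_assoc]
  rw [hexpr]
  exact trace_posdiag_mul_unitary_le hE hYu (fun i => Real.sqrt (eig i))
    (fun i => Real.sqrt_nonneg _)

end Stmt18Aux
namespace Stmt18Aux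
open Matrix Polynomial
variable {n : ℕ}

lemma pauliString_zero : pauliString (fun _ : Fin n => (0 : Fin 4)) = 1 := by
  rw [pauliString_eq_tens]
  have : (fun i : Fin n => pauli 0) = fun _ : Fin n => (1 : Matrix (Fin 2) (Fin 2) ℂ) := by
    funext i; simp [pauli]
  rw [this, tens_one]

lemma pauliCoeff_add (A B : Matrix (Fin n → Fin 2) (Fin n → Fin 2) ℂ) (x : Fin n → Fin 4) :
    pauliCoeff (A + B) x = pauliCoeff A x + pauliCoeff B x := by
  simp [pauliCoeff_eq, Matrix.mul_add, Matrix.trace_add]; ring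

lemma pauliCoeff_one (x : Fin n → Fin 4) :
    pauliCoeff (1 : Matrix (Fin n → Fin 2) (Fin n → Fin 2) ℂ) x
      = if x = (fun _ => 0) then 1 else 0 := by
  rw [← pauliString_zero, pauliCoeff_pauliString]

lemma abs_trace_unitary_le {V : Matrix (Fin n → Fin 2) (Fin n → Fin 2) ℂ}
    (hV : V ∈ Matrix.unitaryGroup (Fin n → Fin 2) ℂ) :
    ‖Matrix.trace V‖ ≤ (2 : ℝ) ^ n := by
  have h1 : Matrix.trace V = (2 ^ n : ℂ) * pauliCoeff V (fun _ => 0) := by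
    rw [← trace_pauliString_mul_eq, pauliString_zero, one_mul]
  have h2 : ‖pauliCoeff V (fun _ => 0)‖ ≤ 1 := by
    have hsum := sum_sq_coeff_of_unitary hV
    have hle : ‖pauliCoeff V (fun _ => 0)‖ ^ 2 ≤ 1 := by
      rw [← hsum]
      exact Finset.single_le_sum (f := fun x => ‖pauliCoeff V x‖ ^ 2)
        (fun x _ => sq_nonneg _) (Finset.mem_univ _)
    nlinarith [norm_nonneg (pauliCoeff V (fun _ => 0))]
  rw [h1, norm_mul]
  have : ‖(2 : ℂ) ^ n‖ = (2 : ℝ) ^ n := by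
    rw [norm_pow]; norm_num
  rw [this]
  nlinarith [pow_pos (by norm_num : (0:ℝ) < 2) n]

lemma sqrt_add_le' {a b : ℝ} (ha : 0 ≤ a) (hb : 0 ≤ b) :
    Real.sqrt (a + b) ≤ Real.sqrt a + Real.sqrt b := by
  rw [show a + b = Real.sqrt a ^ 2 + Real.sqrt b ^ 2 by rw [Real.sq_sqrt ha, Real.sq_sqrt hb]]
  have h1 : Real.sqrt a ^ 2 + Real.sqrt b ^ 2 ≤ (Real.sqrt a + Real.sqrt b) ^ 2 := by
    nlinarith [Real.sqrt_nonneg a, Real.sqrt_nonneg b]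
  calc Real.sqrt (Real.sqrt a ^ 2 + Real.sqrt b ^ 2)
      ≤ Real.sqrt ((Real.sqrt a + Real.sqrt b) ^ 2) := Real.sqrt_le_sqrt h1
    _ = Real.sqrt a + Real.sqrt b :=
        Real.sqrt_sq (add_nonneg (Real.sqrt_nonneg a) (Real.sqrt_nonneg b))

lemma sum_le_sum_of_witness {α ι : Type*} [Fintype α] [DecidableEq α]
    (f : α → ℝ) (hf : ∀ x, 0 ≤ f x) (bad : Finset α) (D : Finset ι) (A : ι → Finset α)
    (h : ∀ x ∈ bad, ∃ i ∈ D, x ∈ A i) :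
    ∑ x ∈ bad, f x ≤ ∑ i ∈ D, ∑ x ∈ A i, f x := by
  classical
  have h1 : ∀ i, ∑ x ∈ A i, f x = ∑ x : α, if x ∈ A i then f x else 0 := by
    intro i
    rw [Finset.sum_ite_mem]
    congr 1
    rw [Finset.univ_inter]
  rw [Finset.sum_congr rfl fun i _ => h1 i, Finset.sum_comm]
  have h2 : ∀ x ∈ bad, f x ≤ ∑ i ∈ D, if x ∈ A i then f x else 0 := by
    intro x hx
    obtain ⟨i, hiD, hiA⟩ := h x hx
    calc f x = if x ∈ A i then f x else 0 := by rw [if_pos hiA]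
      _ ≤ ∑ i ∈ D, if x ∈ A i then f x else 0 :=
          Finset.single_le_sum (f := fun i => if x ∈ A i then f x else 0)
            (fun j _ => by split_ifs; exacts [hf x, le_refl 0]) hiD
  calc ∑ x ∈ bad, f x ≤ ∑ x ∈ bad, ∑ i ∈ D, if x ∈ A i then f x else 0 :=
        Finset.sum_le_sum h2
    _ ≤ ∑ x : α, ∑ i ∈ D, if x ∈ A i then f x else 0 := by
        refine Finset.sum_le_sum_of_subset_of_nonneg (Finset.subset_univ bad) ?_
        intro x _ _
        exact Finset.sum_nonneg fun i _ => by split_ifs; exacts [hf x, le_refl 0]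

lemma exists_delta_det_ne_zero (C : Matrix (Fin n → Fin 2) (Fin n → Fin 2) ℂ)
    {η : ℝ} (hη : 0 < η) :
    ∃ δ : ℝ, 0 < δ ∧ δ < η ∧ (C + (δ : ℂ) • 1).det ≠ 0 := by
  classical
  set q : Polynomial ℂ := (-C).charpoly with hq
  have hqmonic : q.Monic := (-C).charpoly_monic
  have hqne : q ≠ 0 := hqmonic.ne_zero
  have hkey : ∀ z : ℂ, Polynomial.eval z q = (z • 1 + C).det := by
    intro z
    rw [hq, Matrix.charpoly]
    rw [← Polynomial.coe_evalRingHom, RingHom.map_det]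
    congr 1
    ext i j
    rw [RingHom.mapMatrix_apply, Matrix.map_apply]
    by_cases hij : i = j
    · subst hij
      rw [Matrix.charmatrix_apply_eq]
      simp [Matrix.smul_apply, Matrix.one_apply, Matrix.add_apply]
    · rw [Matrix.charmatrix_apply_ne _ _ _ hij]
      simp [Matrix.smul_apply, Matrix.one_apply_ne hij, Matrix.add_apply]
  have hroots : {t : ℝ | Polynomial.eval ((t : ℝ) : ℂ) q = 0}.Finite := by
    have hfin : {z : ℂ | q.IsRoot z}.Finite := Polynomial.finite_setOf_isRoot hqne
    have : {t : ℝ | Polynomial.eval ((t : ℝ) : ℂ) q = 0}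
        = (fun t : ℝ => (t : ℂ)) ⁻¹' {z : ℂ | q.IsRoot z} := rfl
    rw [this]
    exact Set.Finite.preimage (Complex.ofReal_injective.injOn) hfin
  have hinf : (Set.Ioo (0 : ℝ) η).Infinite := Set.Ioo_infinite hη
  obtain ⟨δ, hδmem⟩ := (hinf.diff hroots).nonempty
  obtain ⟨⟨hδ0, hδη⟩, hδroot⟩ := hδmem
  refine ⟨δ, hδ0, hδη, ?_⟩
  have := hkey (δ : ℂ)
  rw [Set.mem_setOf_eq] at hδroot
  intro hdet
  apply hδroot
  rw [this]
  rw [show (δ : ℂ) • (1 : Matrix (Fin n → Fin 2) (Fin n → Fin 2) ℂ) + C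
    = C + (δ : ℂ) • 1 from add_comm _ _]
  exact hdet

end Stmt18Aux
namespace Stmt18Aux
open Matrix Polynomial
variable {n : ℕ}

lemma abs_lower (z w : ℂ) : ‖z‖ - ‖z - w‖ ≤ ‖w‖ := by
  have h := norm_add_le w (z - w)
  rw [show w + (z - w) = z from by ring] at h
  linarith

lemma exists_good_W (U V : Matrix (Fin n → Fin 2) (Fin n → Fin 2) ℂ)
    (hU : U ∈ Matrix.unitaryGroup (Fin n → Fin 2) ℂ)
    (hV : V ∈ Matrix.unitaryGroup (Fin n → Fin 2) ℂ)
    (T T' : Finset (Fin n)) (hT'T : T' ⊆ T) (hVj : IsJuntaOn V T)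
    (τb : ℝ) (hτb : 0 ≤ τb)
    (htail : ∑ x ∈ Finset.univ.filter
        (fun x : Fin n → Fin 4 => psupp x ⊆ T ∧ ¬ psupp x ⊆ T'),
        ‖pauliCoeff U x‖ ^ 2 ≤ τb ^ 2)
    (δ : ℝ) (hδpos : 0 < δ)
    (hdet : (twirl U T' + (δ : ℂ) • 1).det ≠ 0) :
    ∃ W, W ∈ Matrix.unitaryGroup (Fin n → Fin 2) ℂ ∧ IsJuntaOn W T' ∧
      ‖Matrix.trace (Uᴴ * V)‖ - (2:ℝ)^n * τb - 2 * δ * (2:ℝ)^n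
        ≤ ‖Matrix.trace (Uᴴ * W)‖ := by
  classical
  set C := twirl U T' with hCdef
  set M := twirl V T' with hMdef
  set X := C + (δ : ℂ) • 1 with hXdef
  set bad : Finset (Fin n → Fin 4) := Finset.univ.filter
    (fun x : Fin n → Fin 4 => psupp x ⊆ T ∧ ¬ psupp x ⊆ T') with hbaddef
  -- X is a junta on T'
  have hXj : IsJuntaOn X T' := by
    intro x hx
    rw [hXdef, pauliCoeff_add, hCdef, pauliCoeff_twirl, if_neg hx]
    have hxne : x ≠ (fun _ => 0) := by
      intro hx0
      apply hx
      rw [hx0]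
      intro i hi
      simp [psupp] at hi
    rw [show ((δ : ℂ) • (1 : Matrix (Fin n → Fin 2) (Fin n → Fin 2) ℂ))
        = ((δ : ℂ) • (1 : Matrix (Fin n → Fin 2) (Fin n → Fin 2) ℂ)) from rfl]
    rw [pauliCoeff_smul, pauliCoeff_one, if_neg hxne]
    ring
  obtain ⟨W, s, hWu, hWj, hs0, htrW, hbnd⟩ :=
    polar_exists T' X hXj (isUnit_iff_ne_zero.mpr hdet)
  refine ⟨W, hWu, hWj, ?_⟩
  have h2n : (0:ℝ) < (2:ℝ)^n := pow_pos (by norm_num) n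
  -- Step 1 : |tr(UᴴV) - tr(UᴴM)| ≤ 2^n τb
  have hdiff : Matrix.trace (Uᴴ * V) - Matrix.trace (Uᴴ * M)
      = (2^n : ℂ) * ∑ x ∈ bad, (starRingEnd ℂ) (pauliCoeff U x) * pauliCoeff V x := by
    rw [parseval, parseval, ← mul_sub, ← Finset.sum_sub_distrib]
    congr 1
    rw [hbaddef, Finset.sum_filter]
    refine Finset.sum_congr rfl fun x _ => ?_
    by_cases h1 : psupp x ⊆ T'
    · rw [hMdef, pauliCoeff_twirl, if_pos h1]
      rw [if_neg (by intro hcon; exact hcon.2 h1)]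
      ring
    · rw [hMdef, pauliCoeff_twirl, if_neg h1, mul_zero, sub_zero]
      by_cases h2 : psupp x ⊆ T
      · rw [if_pos ⟨h2, h1⟩]
      · rw [if_neg (by intro hcon; exact h2 hcon.1), hVj x h2, mul_zero]
  have hstep1 : ‖Matrix.trace (Uᴴ * V) - Matrix.trace (Uᴴ * M)‖
      ≤ (2:ℝ)^n * τb := by
    rw [hdiff, norm_mul]
    have habs2n : ‖(2:ℂ)^n‖ = (2:ℝ)^n := by rw [norm_pow]; norm_num
    rw [habs2n]
    refine mul_le_mul_of_nonneg_left ?_ (le_of_lt h2n)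
    refine le_trans (abs_sum_conj_mul_le bad (fun x => pauliCoeff U x)
      (fun x => pauliCoeff V x)) ?_
    have hUb : Real.sqrt (∑ x ∈ bad, ‖pauliCoeff U x‖ ^ 2) ≤ τb := by
      refine le_trans (Real.sqrt_le_sqrt htail) ?_
      rw [Real.sqrt_sq hτb]
    have hVb : Real.sqrt (∑ x ∈ bad, ‖pauliCoeff V x‖ ^ 2) ≤ 1 := by
      have h1 : (∑ x ∈ bad, ‖pauliCoeff V x‖ ^ 2) ≤ 1 := by
        rw [← sum_sq_coeff_of_unitary hV]
        exact Finset.sum_le_sum_of_subset_of_nonneg (Finset.subset_univ bad)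
          (fun x _ _ => sq_nonneg _)
      calc Real.sqrt (∑ x ∈ bad, ‖pauliCoeff V x‖ ^ 2)
          ≤ Real.sqrt 1 := Real.sqrt_le_sqrt h1
        _ = 1 := Real.sqrt_one
    calc Real.sqrt (∑ x ∈ bad, ‖pauliCoeff U x‖ ^ 2)
          * Real.sqrt (∑ x ∈ bad, ‖pauliCoeff V x‖ ^ 2)
        ≤ τb * 1 := mul_le_mul hUb hVb (Real.sqrt_nonneg _) hτb
      _ = τb := mul_one _
  -- Step 2 : tr(CᴴM) = tr(UᴴM), tr(CᴴW) = tr(UᴴW)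
  have hCU : ∀ Y : Matrix (Fin n → Fin 2) (Fin n → Fin 2) ℂ, IsJuntaOn Y T' →
      Matrix.trace (Cᴴ * Y) = Matrix.trace (Uᴴ * Y) := by
    intro Y hYj
    rw [parseval, parseval]
    congr 1
    refine Finset.sum_congr rfl fun x _ => ?_
    by_cases h1 : psupp x ⊆ T'
    · rw [hCdef, pauliCoeff_twirl, if_pos h1]
    · rw [hYj x h1, mul_zero, mul_zero]
  -- Step 3 : tr(XᴴY) = tr(CᴴY) + δ tr Y
  have hXtr : ∀ Y : Matrix (Fin n → Fin 2) (Fin n → Fin 2) ℂ,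
      Matrix.trace (Xᴴ * Y) = Matrix.trace (Cᴴ * Y) + (δ:ℂ) * Matrix.trace Y := by
    intro Y
    rw [hXdef, Matrix.conjTranspose_add, Matrix.conjTranspose_smul,
      Matrix.conjTranspose_one, Matrix.add_mul, Matrix.trace_add, Matrix.smul_mul,
      one_mul, Matrix.trace_smul]
    rw [show star (δ:ℂ) = (δ:ℂ) from Complex.conj_ofReal δ]
    rw [smul_eq_mul]
  -- trace of M
  have hterm : ∀ z ∈ Zset T',
      Matrix.trace (pauliString z * V * pauliString z) = Matrix.trace V := by
    intro z hz
    rw [Matrix.trace_mul_cycle, pauliString_mul_self, one_mul]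
  have htrM : Matrix.trace M = Matrix.trace V := by
    rw [hMdef, twirl, Matrix.trace_smul, Matrix.trace_sum, Finset.sum_congr rfl hterm,
      Finset.sum_const, smul_eq_mul, nsmul_eq_mul, ← mul_assoc,
      inv_mul_cancel₀ (Zset_card_ne_zero T'), one_mul]
  -- Step 4 : |tr(XᴴM)| ≤ s
  have hstep4 : ‖Matrix.trace (Xᴴ * M)‖ ≤ s := by
    have hexp : Matrix.trace (Xᴴ * M)
        = ((((Zset T').card : ℕ) : ℂ))⁻¹ *
          ∑ z ∈ Zset T', Matrix.trace (Xᴴ * (pauliString z * V * pauliString z)) := by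
      rw [hMdef, twirl, Matrix.mul_smul, Matrix.trace_smul, smul_eq_mul, Finset.mul_sum,
        Matrix.trace_sum]
    rw [hexp, norm_mul, norm_inv, Complex.norm_natCast]
    have hzc : (0:ℝ) < ((Zset T').card : ℝ) := by exact_mod_cast Zset_card_pos T'
    have hsum : ‖∑ z ∈ Zset T',
        Matrix.trace (Xᴴ * (pauliString z * V * pauliString z))‖
        ≤ ((Zset T').card : ℝ) * s := by
      refine le_trans (norm_sum_le _ _) ?_
      rw [show (((Zset T').card : ℝ) * s) = ∑ _z ∈ Zset T', s by
        rw [Finset.sum_const, nsmul_eq_mul]]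
      refine Finset.sum_le_sum fun z hz => ?_
      refine hbnd _ ?_
      exact mul_mem (mul_mem (pauliString_mem_unitaryGroup z) hV)
        (pauliString_mem_unitaryGroup z)
    calc (((Zset T').card : ℝ))⁻¹ * ‖∑ z ∈ Zset T',
          Matrix.trace (Xᴴ * (pauliString z * V * pauliString z))‖
        ≤ (((Zset T').card : ℝ))⁻¹ * (((Zset T').card : ℝ) * s) := by
          exact mul_le_mul_of_nonneg_left hsum (by positivity)
      _ = s := by field_simp
  -- assemble the real inequalities
  set a : ℝ := ‖Matrix.trace (Uᴴ * V)‖ with hadef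
  have hA1 : a - (2:ℝ)^n * τb ≤ ‖Matrix.trace (Uᴴ * M)‖ := by
    have := abs_lower (Matrix.trace (Uᴴ * V)) (Matrix.trace (Uᴴ * M))
    linarith [hstep1]
  have htrMabs : ‖Matrix.trace M‖ ≤ (2:ℝ)^n := by
    rw [htrM]; exact abs_trace_unitary_le hV
  have hXM : Matrix.trace (Xᴴ * M) = Matrix.trace (Uᴴ * M) + (δ:ℂ) * Matrix.trace M := by
    rw [hXtr M, hCU M (isJuntaOn_twirl V T')]
  have hA2 : a - (2:ℝ)^n * τb - δ * (2:ℝ)^n ≤ ‖Matrix.trace (Xᴴ * M)‖ := by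
    have h := abs_lower (Matrix.trace (Uᴴ * M)) (Matrix.trace (Xᴴ * M))
    have hd : Matrix.trace (Uᴴ * M) - Matrix.trace (Xᴴ * M) = -((δ:ℂ) * Matrix.trace M) := by
      rw [hXM]; ring
    rw [hd, norm_neg, norm_mul, Complex.norm_real, Real.norm_eq_abs,
      abs_of_pos hδpos] at h
    have hmul : δ * ‖Matrix.trace M‖ ≤ δ * (2:ℝ)^n :=
      mul_le_mul_of_nonneg_left htrMabs (le_of_lt hδpos)
    linarith [hA1]
  have hA3 : a - (2:ℝ)^n * τb - δ * (2:ℝ)^n ≤ s := le_trans hA2 hstep4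
  have htrWabs : ‖Matrix.trace W‖ ≤ (2:ℝ)^n := abs_trace_unitary_le hWu
  have hA4 : s - δ * (2:ℝ)^n ≤ ‖Matrix.trace (Cᴴ * W)‖ := by
    have hd : Matrix.trace (Xᴴ * W) - Matrix.trace (Cᴴ * W) = (δ:ℂ) * Matrix.trace W := by
      rw [hXtr W]; ring
    have h := abs_lower (Matrix.trace (Xᴴ * W)) (Matrix.trace (Cᴴ * W))
    rw [hd, norm_mul, Complex.norm_real, Real.norm_eq_abs, abs_of_pos hδpos, htrW,
      Complex.norm_real, Real.norm_eq_abs, abs_of_nonneg hs0] at h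
    have hmul : δ * ‖Matrix.trace W‖ ≤ δ * (2:ℝ)^n :=
      mul_le_mul_of_nonneg_left htrWabs (le_of_lt hδpos)
    linarith
  have hUW : Matrix.trace (Uᴴ * W) = Matrix.trace (Cᴴ * W) := (hCU W hWj).symm
  rw [hUW]
  linarith

end Stmt18Aux
theorem stmt18 {n : ℕ} (k : ℕ) (hk : k < n) (τ : ℝ) (hτ : 0 < τ)
    (S : Finset (Fin n))
    (U : Matrix (Fin n → Fin 2) (Fin n → Fin 2) ℂ)
    (hU : U ∈ Matrix.unitaryGroup (Fin n → Fin 2) ℂ)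
    (hS : ∀ i : Fin n, τ ^ 2 / k ≤ infLe U k i → i ∈ S) :
    distToKJuntaIn U S k ≤ distToKJuntaIn U Finset.univ k + Real.sqrt τ := by
  classical
  open Stmt18Aux in
  unfold distToKJuntaIn
  set QS : Set ℝ := {r : ℝ | ∃ V ∈ Matrix.unitaryGroup (Fin n → Fin 2) ℂ,
    ∃ T : Finset (Fin n), T ⊆ S ∧ T.card ≤ k ∧ IsJuntaOn V T ∧
    r = Real.sqrt (1 - ‖Matrix.trace (Uᴴ * V)‖ / (2 ^ n : ℝ))} with hQSdef
  set QU : Set ℝ := {r : ℝ | ∃ V ∈ Matrix.unitaryGroup (Fin n → Fin 2) ℂ,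
    ∃ T : Finset (Fin n), T ⊆ Finset.univ ∧ T.card ≤ k ∧ IsJuntaOn V T ∧
    r = Real.sqrt (1 - ‖Matrix.trace (Uᴴ * V)‖ / (2 ^ n : ℝ))} with hQUdef
  have hone : ∀ S' : Finset (Fin n),
      Real.sqrt (1 - ‖Matrix.trace
        (Uᴴ * (1 : Matrix (Fin n → Fin 2) (Fin n → Fin 2) ℂ))‖ / (2 ^ n : ℝ))
      ∈ {r : ℝ | ∃ V ∈ Matrix.unitaryGroup (Fin n → Fin 2) ℂ,
        ∃ T : Finset (Fin n), T ⊆ S' ∧ T.card ≤ k ∧ IsJuntaOn V T ∧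
        r = Real.sqrt (1 - ‖Matrix.trace (Uᴴ * V)‖ / (2 ^ n : ℝ))} := by
    intro S'
    refine ⟨1, one_mem _, ∅, Finset.empty_subset _, by simp, ?_, rfl⟩
    exact Stmt18Aux.junta_of_commute fun z _ => by rw [one_mul, mul_one]
  have hQSne : QS.Nonempty := ⟨_, hone S⟩
  have hQUne : QU.Nonempty := ⟨_, hone Finset.univ⟩
  have hQSbdd : BddBelow QS := by
    refine ⟨0, fun r hr => ?_⟩
    obtain ⟨V, _, T, _, _, _, hr⟩ := hr
    rw [hr]
    exact Real.sqrt_nonneg _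
  have h2n : (0:ℝ) < (2:ℝ)^n := pow_pos (by norm_num) n
  -- the key pointwise bound
  have key : ∀ r ∈ QU, sInf QS ≤ r + Real.sqrt τ := by
    rintro r ⟨V, hV, T, -, hTk, hVj, hr⟩
    set T' : Finset (Fin n) := T ∩ S with hT'def
    -- tail bound
    have htail : ∑ x ∈ Finset.univ.filter
        (fun x : Fin n → Fin 4 => psupp x ⊆ T ∧ ¬ psupp x ⊆ T'),
        ‖pauliCoeff U x‖ ^ 2 ≤ τ ^ 2 := by
      have hwit := Stmt18Aux.sum_le_sum_of_witness
        (fun x : Fin n → Fin 4 => ‖pauliCoeff U x‖ ^ 2)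
        (fun x => sq_nonneg _)
        (Finset.univ.filter (fun x : Fin n → Fin 4 => psupp x ⊆ T ∧ ¬ psupp x ⊆ T'))
        (T \ S)
        (fun i => Finset.univ.filter
          (fun x : Fin n → Fin 4 => (psupp x).card ≤ k ∧ x i ≠ 0))
        ?_
      · refine le_trans hwit ?_
        have hinf : ∀ i ∈ T \ S, (∑ x ∈ Finset.univ.filter
            (fun x : Fin n → Fin 4 => (psupp x).card ≤ k ∧ x i ≠ 0),
            ‖pauliCoeff U x‖ ^ 2) ≤ τ^2 / k := by
          intro i hi
          have hiS : i ∉ S := (Finset.mem_sdiff.mp hi).2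
          have := mt (hS i) hiS
          have hlt : infLe U k i < τ^2 / k := lt_of_not_ge this
          exact le_of_lt hlt
        calc ∑ i ∈ T \ S, ∑ x ∈ Finset.univ.filter
              (fun x : Fin n → Fin 4 => (psupp x).card ≤ k ∧ x i ≠ 0),
              ‖pauliCoeff U x‖ ^ 2
            ≤ ∑ _i ∈ T \ S, τ^2/k := Finset.sum_le_sum hinf
          _ = ((T \ S).card : ℝ) * (τ^2/k) := by rw [Finset.sum_const, nsmul_eq_mul]
          _ ≤ (k : ℝ) * (τ^2/k) := by
              have hcard : (T \ S).card ≤ k :=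
                le_trans (Finset.card_le_card (Finset.sdiff_subset)) hTk
              have : ((T \ S).card : ℝ) ≤ (k : ℝ) := by exact_mod_cast hcard
              have hdiv : (0:ℝ) ≤ τ^2/k := by positivity
              exact mul_le_mul_of_nonneg_right this hdiv
          _ ≤ τ^2 := by
              rcases Nat.eq_zero_or_pos k with hk0 | hk0
              · subst hk0; simp; positivity
              · have : (0:ℝ) < k := by exact_mod_cast hk0
                rw [mul_div_cancel₀]
                exact ne_of_gt this
      · intro x hx
        rw [Finset.mem_filter] at hx
        obtain ⟨-, hxT, hxT'⟩ := hx
        obtain ⟨i, hi, hiT'⟩ := Finset.not_subset.mp hxT'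
        have hiT : i ∈ T := hxT hi
        have hiS : i ∉ S := fun hiS => hiT' (Finset.mem_inter.mpr ⟨hiT, hiS⟩)
        refine ⟨i, Finset.mem_sdiff.mpr ⟨hiT, hiS⟩, ?_⟩
        rw [Finset.mem_filter]
        refine ⟨Finset.mem_univ _, le_trans (Finset.card_le_card hxT) hTk, ?_⟩
        simpa [psupp] using hi
    -- a ≤ 2^n
    have hUV : Uᴴ * V ∈ Matrix.unitaryGroup (Fin n → Fin 2) ℂ := by
      rw [← Matrix.star_eq_conjTranspose]
      exact mul_mem (Unitary.star_mem hU) hV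
    have ha2n : ‖Matrix.trace (Uᴴ * V)‖ ≤ (2:ℝ)^n :=
      Stmt18Aux.abs_trace_unitary_le hUV
    -- for every η > 0
    refine le_of_forall_pos_le_add ?_
    intro η hη
    obtain ⟨δ, hδ0, hδlt, hδdet⟩ :=
      Stmt18Aux.exists_delta_det_ne_zero (Stmt18Aux.twirl U T')
        (show (0:ℝ) < η^2/2 by positivity)
    obtain ⟨W, hWu, hWj, hWbound⟩ :=
      Stmt18Aux.exists_good_W U V hU hV T T' Finset.inter_subset_left hVj
        τ (le_of_lt hτ) htail δ hδ0 hδdet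
    have hmem : Real.sqrt (1 - ‖Matrix.trace (Uᴴ * W)‖ / (2 ^ n : ℝ)) ∈ QS := by
      refine ⟨W, hWu, T', Finset.inter_subset_right, ?_, hWj, rfl⟩
      exact le_trans (Finset.card_le_card Finset.inter_subset_left) hTk
    refine le_trans (csInf_le hQSbdd hmem) ?_
    -- numeric estimate
    set a : ℝ := ‖Matrix.trace (Uᴴ * V)‖ with hadef
    set b : ℝ := ‖Matrix.trace (Uᴴ * W)‖ with hbdef
    have hdiv : 1 - b / (2:ℝ)^n ≤ (1 - a / (2:ℝ)^n) + (τ + 2*δ) := by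
      have h1 : (a - (2:ℝ)^n * τ - 2*δ*(2:ℝ)^n) / (2:ℝ)^n ≤ b / (2:ℝ)^n :=
        (div_le_div_iff_of_pos_right h2n).mpr hWbound
      have h2 : (a - (2:ℝ)^n * τ - 2*δ*(2:ℝ)^n) / (2:ℝ)^n = a/(2:ℝ)^n - τ - 2*δ := by
        field_simp
      rw [h2] at h1
      linarith
    have hge0 : (0:ℝ) ≤ 1 - a / (2:ℝ)^n := by
      have : a / (2:ℝ)^n ≤ 1 := by
        rw [div_le_one h2n]; exact ha2n
      linarith
    have hτδ : (0:ℝ) ≤ τ + 2*δ := by positivity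
    calc Real.sqrt (1 - b / (2:ℝ)^n)
        ≤ Real.sqrt ((1 - a / (2:ℝ)^n) + (τ + 2*δ)) := Real.sqrt_le_sqrt hdiv
      _ ≤ Real.sqrt (1 - a / (2:ℝ)^n) + Real.sqrt (τ + 2*δ) :=
          Stmt18Aux.sqrt_add_le' hge0 hτδ
      _ ≤ Real.sqrt (1 - a / (2:ℝ)^n) + (Real.sqrt τ + Real.sqrt (2*δ)) := by
          have := Stmt18Aux.sqrt_add_le' (le_of_lt hτ)
            (show (0:ℝ) ≤ 2*δ by positivity)
          linarith
      _ ≤ r + Real.sqrt τ + η := by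
          have hsq : Real.sqrt (2*δ) ≤ η := by
            have h1 : 2*δ ≤ η^2 := by linarith
            calc Real.sqrt (2*δ) ≤ Real.sqrt (η^2) := Real.sqrt_le_sqrt h1
              _ = η := Real.sqrt_sq (le_of_lt hη)
          rw [hr, hadef]
          linarith
  -- conclude
  have hlow : sInf QS - Real.sqrt τ ≤ sInf QU := by
    refine le_csInf hQUne fun r hr => ?_
    have := key r hr
    linarith
  linarith
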